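/- arXiv:2310.14235 — 3 statements merged into one kernel-verified Lean document; each statement's English description precedes it below -/
import Mathlib

section
/- Let X be a topological space and A, B ⊆ X subsets such that X is the disjoint union of A and B, A is closed in X, and every point of B is closed in X. If A is a sober space and B is Hausdorff in their subspace topologies, then X is sober. -/
/-- A topological space is sober: every irreducible closed subset is the
closure of exactly one point. -/
def IsSoberSpace (X : Type*) [TopologicalSpace X] : Prop :=
  ∀ S : Set X, IsIrreducible S → IsClosed S → ∃! x : X, closure {x} = S

theorem stmt_0 {X : Type*} [TopologicalSpace X] (A B : Set X)
    (hunion : A ∪ B = Set.univ) (hdisj : Disjoint A B)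
    (hAclosed : IsClosed A)
    (hBpts : ∀ x ∈ B, IsClosed ({x} : Set X))
    (hAsober : IsSoberSpace A)
    (hBT2 : T2Space B) :
    IsSoberSpace X := by
  have hBcompl : B = Aᶜ := by
    apply subset_antisymm
    · exact fun x hx => (Set.disjoint_right.mp hdisj hx)
    · intro x hx
      rcases (hunion ▸ Set.mem_univ x : x ∈ A ∪ B) with h | h
      · exact absurd h hx
      · exact h
  have hBopen : IsOpen B := by rw [hBcompl]; exact hAclosed.isOpen_compl
  intro S hS hScl
  by_cases hSB : (S ∩ B).Nonempty
  · -- case S meets B: S must be a singleton {b} with b ∈ B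
    obtain ⟨b, hbS, hbB⟩ := hSB
    -- S ∩ B is subsingleton
    have hpre : IsPreirreducible ((Subtype.val : B → X) ⁻¹' S) :=
      hS.2.preimage hBopen.isOpenEmbedding_subtypeVal
    have hsub : (S ∩ B).Subsingleton := by
      intro x hx y hy
      have := hpre.subsingleton (x := ⟨x, hx.2⟩) (y := ⟨y, hy.2⟩) hx.1 hy.1
      exact congrArg Subtype.val this
    -- S ⊆ (S ∩ A) ∪ {b}, both closed
    have hcover : S ⊆ (S ∩ A) ∪ {b} := by
      intro x hx
      rcases (hunion ▸ Set.mem_univ x : x ∈ A ∪ B) with h | h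
      · exact Or.inl ⟨hx, h⟩
      · exact Or.inr (hsub ⟨hx, h⟩ ⟨hbS, hbB⟩)
    have hSeq : S = {b} := by
      rcases isPreirreducible_iff_isClosed_union_isClosed.mp hS.2 (S ∩ A) {b}
          (hScl.inter hAclosed) (hBpts b hbB) hcover with h | h
      · exact absurd (h hbS).2 (Set.disjoint_right.mp hdisj hbB)
      · exact subset_antisymm h (Set.singleton_subset_iff.mpr hbS)
    refine ⟨b, ?_, ?_⟩
    · rw [hSeq]; exact (hBpts b hbB).closure_eq
    · intro y hy
      have : y ∈ closure {y} := subset_closure rfl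
      rw [hy, hSeq] at this
      exact this
  · -- case S ⊆ A
    have hSA : S ⊆ A := by
      intro x hx
      rcases (hunion ▸ Set.mem_univ x : x ∈ A ∪ B) with h | h
      · exact h
      · exact absurd ⟨x, hx, h⟩ hSB
    have hce := hAclosed.isClosedEmbedding_subtypeVal
    set T : Set A := Subtype.val ⁻¹' S with hT
    have hTim : Subtype.val '' T = S := by
      rw [hT, Subtype.image_preimage_coe, Set.inter_eq_right.mpr hSA]
    have hTcl : IsClosed T := hScl.preimage continuous_subtype_val
    have hTirr : IsIrreducible T := by
      constructor
      · obtain ⟨x, hx⟩ := hS.1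
        exact ⟨⟨x, hSA hx⟩, hx⟩
      · intro u v hu hv ⟨x, hxT, hxu⟩ ⟨y, hyT, hyv⟩
        obtain ⟨U, hU, rfl⟩ := isOpen_induced_iff.mp hu
        obtain ⟨V, hV, rfl⟩ := isOpen_induced_iff.mp hv
        obtain ⟨z, hzS, hzU, hzV⟩ := hS.2 U V hU hV ⟨x, hxT, hxu⟩ ⟨y, hyT, hyv⟩
        exact ⟨⟨z, hSA hzS⟩, hzS, hzU, hzV⟩
    obtain ⟨a, ha, hauniq⟩ := hAsober T hTirr hTcl
    refine ⟨a, ?_, ?_⟩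
    · show closure ({(a : X)} : Set X) = S
      rw [← Set.image_singleton, hce.closure_image_eq, ha, hTim]
    · intro y hy
      have hyS : y ∈ S := by rw [← hy]; exact subset_closure rfl
      have hyA : y ∈ A := hSA hyS
      have : closure ({⟨y, hyA⟩} : Set A) = T := by
        rw [hce.isEmbedding.closure_eq_preimage_closure_image, Set.image_singleton, hy]
      exact congrArg Subtype.val (hauniq ⟨y, hyA⟩ this)
end

section
/- A retract of a homotopy equivalence in the arrow category of topological spaces is a homotopy equivalence. That is, if f : X → Y is a retract of g : A → B (there are maps i : X → A, r : A → X with r∘i = id_X, and j : Y → B, s : B → Y with s∘j = id_Y, such that g∘i = j∘f and f∘r = s∘g), and g is a homotopy equivalence, then f is a homotopy equivalence. -/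
/-- A continuous map is a homotopy equivalence if it has a two-sided homotopy
inverse. -/
def IsHomotopyEquiv {X Y : Type*} [TopologicalSpace X] [TopologicalSpace Y]
    (f : C(X, Y)) : Prop :=
  ∃ g : C(Y, X), (g.comp f).Homotopic (ContinuousMap.id X) ∧
    (f.comp g).Homotopic (ContinuousMap.id Y)

theorem stmt_10 {X Y A B : Type*} [TopologicalSpace X] [TopologicalSpace Y]
    [TopologicalSpace A] [TopologicalSpace B]
    (f : C(X, Y)) (g : C(A, B))
    (i : C(X, A)) (r : C(A, X)) (j : C(Y, B)) (s : C(B, Y))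
    (hri : r.comp i = ContinuousMap.id X)
    (hsj : s.comp j = ContinuousMap.id Y)
    (hsq1 : g.comp i = j.comp f)
    (hsq2 : f.comp r = s.comp g)
    (hg : IsHomotopyEquiv g) :
    IsHomotopyEquiv f := by
  obtain ⟨g', hg1, hg2⟩ := hg
  refine ⟨r.comp (g'.comp j), ?_, ?_⟩
  · have h1 : ((r.comp (g'.comp g)).comp i).Homotopic
        ((r.comp (ContinuousMap.id A)).comp i) :=
      (ContinuousMap.Homotopic.refl r).comp
        (hg1.comp (ContinuousMap.Homotopic.refl i))
    have e1 : (r.comp (g'.comp j)).comp f = (r.comp (g'.comp g)).comp i := by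
      simp [ContinuousMap.comp_assoc, hsq1]
    have e2 : (r.comp (ContinuousMap.id A)).comp i = ContinuousMap.id X := by
      simp [hri]
    rw [e1, ← e2]
    exact h1
  · have h1 : ((s.comp (g.comp g')).comp j).Homotopic
        ((s.comp (ContinuousMap.id B)).comp j) :=
      (ContinuousMap.Homotopic.refl s).comp
        (hg2.comp (ContinuousMap.Homotopic.refl j))
    have e1 : f.comp (r.comp (g'.comp j)) = (s.comp (g.comp g')).comp j := by
      ext x
      simpa using ContinuousMap.congr_fun hsq2 (g' (j x))
    have e2 : (s.comp (ContinuousMap.id B)).comp j = ContinuousMap.id Y := by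
      simp [hsj]
    rw [e1, ← e2]
    exact h1
end

section
/- Let k₀ : L → L be a prenucleus on a frame L, i.e., an order-preserving map with x ≤ k₀(x) and k₀(x) ⊓ y ≤ k₀(x ⊓ y) for all x, y. Define k(x) = ⨅ { y ∈ Fix(k₀) : x ≤ y }, where Fix(k₀) is the set of fixed points of k₀. Then k is a nucleus on L: k is a closure operator (monotone, inflationary, idempotent) that preserves binary meets, and Fix(k) = Fix(k₀). -/
variable {L : Type*} [Order.Frame L]

/-- The nucleus generated by a prenucleus `k₀`: the meet of all fixed points
of `k₀` above a given element. -/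
def genNucleus (k₀ : L → L) (x : L) : L :=
  sInf {y : L | k₀ y = y ∧ x ≤ y}

theorem stmt_18 (k₀ : L → L) (hmono : Monotone k₀)
    (hinfl : ∀ x, x ≤ k₀ x)
    (hpre : ∀ x y, k₀ x ⊓ y ≤ k₀ (x ⊓ y)) :
    Monotone (genNucleus k₀) ∧
    (∀ x, x ≤ genNucleus k₀ x) ∧
    (∀ x, genNucleus k₀ (genNucleus k₀ x) = genNucleus k₀ x) ∧
    (∀ x y, genNucleus k₀ (x ⊓ y) = genNucleus k₀ x ⊓ genNucleus k₀ y) ∧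
    (∀ x, k₀ x = x ↔ genNucleus k₀ x = x) := by
  -- genNucleus is itself a fixed point
  have hle : ∀ x, x ≤ genNucleus k₀ x := fun x =>
    le_sInf fun y hy => hy.2
  have hfix : ∀ x, k₀ (genNucleus k₀ x) = genNucleus k₀ x := by
    intro x
    refine le_antisymm (le_sInf fun y hy => ?_) (hinfl _)
    calc k₀ (genNucleus k₀ x) ≤ k₀ y := hmono (sInf_le hy)
    _ = y := hy.1
  have hleast : ∀ x y, k₀ y = y → x ≤ y → genNucleus k₀ x ≤ y := fun x y h1 h2 =>
    sInf_le ⟨h1, h2⟩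
  have hmono' : Monotone (genNucleus k₀) := fun a b hab =>
    le_sInf fun y hy => sInf_le ⟨hy.1, hab.trans hy.2⟩
  have hidem : ∀ x, genNucleus k₀ (genNucleus k₀ x) = genNucleus k₀ x := fun x =>
    le_antisymm (hleast _ _ (hfix x) le_rfl) (hle _)
  -- himp into a fixed point is fixed
  have himpfix : ∀ (a c : L), k₀ c = c → k₀ (a ⇨ c) = a ⇨ c := by
    intro a c hc
    refine le_antisymm (le_himp_iff.2 ?_) (hinfl _)
    calc k₀ (a ⇨ c) ⊓ a ≤ k₀ ((a ⇨ c) ⊓ a) := hpre _ _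
    _ ≤ k₀ c := hmono (by simp [inf_comm, inf_himp_le])
    _ = c := hc
  refine ⟨hmono', hle, hidem, fun x y => ?_, fun x => ?_⟩
  · refine le_antisymm (le_inf (hmono' inf_le_left) (hmono' inf_le_right)) ?_
    refine le_sInf fun c hc => ?_
    have h1 : genNucleus k₀ x ≤ y ⇨ c := by
      refine hleast _ _ (himpfix _ _ hc.1) (le_himp_iff.2 hc.2)
    have h2 : genNucleus k₀ y ≤ genNucleus k₀ x ⇨ c := by
      refine hleast _ _ (himpfix _ _ hc.1) (le_himp_iff.2 ?_)
      exact (inf_le_inf_left y h1).trans inf_himp_le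
    calc genNucleus k₀ x ⊓ genNucleus k₀ y
        ≤ genNucleus k₀ x ⊓ (genNucleus k₀ x ⇨ c) := inf_le_inf_left _ h2
    _ ≤ c := inf_himp_le
  · constructor
    · intro h; exact le_antisymm (hleast _ _ h le_rfl) (hle _)
    · intro h; rw [← h]; exact hfix x
end
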